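/- Let t > 0, 0 ≤ y < t and F(x) = |x| + (x − y)²/(2t). Then for all real numbers a ≤ b, the ratio (∫_{Ta}^{Tb} exp(−F(x)/T) dx) / (∫_ℝ exp(−F(x)/T) dx) converges, as T → 0⁺, to ∫_a^b ((1 − y²/t²)/2) · exp(−|x| + x y/t) dx. In other words, if X_T has density proportional to exp(−F(x)/T), then X_T/T converges in distribution to the random variable X(y,t) with density x ↦ ((1 − y²/t²)/2)·exp(−|x|(1 − sgn(x)y/t)). -/

import Mathlib

open Filter MeasureTheory

/-- The one-dimensional objective `F(x) = |x| + (x − y)²/(2t)`. -/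
noncomputable def obj1 (y t x : ℝ) : ℝ := |x| + (x - y) ^ 2 / (2 * t)

/-- auxiliary kernel -/
noncomputable def Gker (y t T u : ℝ) : ℝ := Real.exp (-|u| + u * y / t - T * u ^ 2 / (2 * t))

lemma Gker_def (y t T u : ℝ) :
    Gker y t T u = Real.exp (-|u| + u * y / t - T * u ^ 2 / (2 * t)) := rfl

lemma exp_int_Ioi (c : ℝ) (hc : 0 < c) :
    ∫ x in Set.Ioi (0:ℝ), Real.exp (-(c * x)) = 1 / c := by
  have h := integral_comp_mul_left_Ioi (fun x => Real.exp (-x)) 0 hc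
  simp only [mul_zero, integral_exp_neg_Ioi, neg_zero, Real.exp_zero, smul_eq_mul,
    mul_one] at h
  rw [h, one_div]

set_option maxHeartbeats 2000000 in
/-- For `0 ≤ y < t`, the law of `X_T/T` converges to the law with density
`x ↦ ((1 − y²/t²)/2)·exp(−|x| + xy/t)`. -/
theorem stmt9 (t y : ℝ) (ht : 0 < t) (hy0 : 0 ≤ y) (hyt : y < t)
    (a b : ℝ) (hab : a ≤ b) :
    Tendsto
      (fun T : ℝ =>
        (∫ x in (T * a)..(T * b), Real.exp (-(obj1 y t x) / T)) /
          ∫ x : ℝ, Real.exp (-(obj1 y t x) / T))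
      (nhdsWithin 0 (Set.Ioi 0))
      (nhds (∫ x in a..b, (1 - y ^ 2 / t ^ 2) / 2 * Real.exp (-|x| + x * y / t))) := by
  set G : ℝ → ℝ → ℝ := Gker y t with hG
  have hc1 : 0 < 1 - y / t := by
    rw [sub_pos, div_lt_one ht]; exact hyt
  have hc2 : 0 < 1 + y / t := by positivity
  -- G 0 coincides with the limiting density kernel
  have hG0 : ∀ u, G 0 u = Real.exp (-|u| + u * y / t) := by
    intro u; simp [hG, Gker_def]
  -- continuity of G T in u
  have hGcont : ∀ T, Continuous (G T) := by
    intro T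
    simp only [hG, Gker_def]
    exact (((continuous_abs.neg.add (continuous_id.mul continuous_const |>.div_const t)).sub
      ((continuous_const.mul (continuous_pow 2)).div_const (2 * t))).rexp)
  -- pointwise bound for T ≥ 0
  have hGle : ∀ T ≥ (0:ℝ), ∀ u, G T u ≤ G 0 u := by
    intro T hT u
    simp only [hG, Gker_def]
    apply Real.exp_le_exp.2
    have : 0 ≤ T * u ^ 2 / (2 * t) := by positivity
    simp only [zero_mul, zero_div, sub_zero]
    linarith
  -- integrability of G 0
  have hIoi : IntegrableOn (G 0) (Set.Ioi 0) := by
    refine ((exp_neg_integrableOn_Ioi 0 hc1).congr_fun ?_ measurableSet_Ioi)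
    intro x hx
    simp only [Set.mem_Ioi] at hx
    rw [hG0, abs_of_pos hx]
    exact congrArg Real.exp (by ring)
  have hIic : IntegrableOn (G 0) (Set.Iic 0) := by
    have h2 : IntegrableOn (fun x : ℝ => Real.exp (-(1 + y / t) * (-x))) (Set.Iic 0) := by
      rw [integrableOn_Iic_iff_integrableOn_Iio]
      have A : MeasurableEmbedding fun x : ℝ => -x :=
        (Homeomorph.neg ℝ).isClosedEmbedding.measurableEmbedding
      have h3 := (exp_neg_integrableOn_Ioi 0 hc2)
      rw [IntegrableOn, ← Measure.map_neg_eq_self (volume : Measure ℝ),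
        (MeasurableEmbedding.restrict_map A _), A.integrable_map_iff] at h3
      simpa [Function.comp_def, IntegrableOn] using h3
    refine h2.congr_fun ?_ measurableSet_Iic
    intro x hx
    simp only [Set.mem_Iic] at hx
    rw [hG0, abs_of_nonpos hx]
    exact congrArg Real.exp (by ring)
  have hInt0 : Integrable (G 0) := by
    rw [← integrableOn_univ, ← Set.Iic_union_Ioi (a := (0:ℝ))]
    exact hIic.union hIoi
  have hGpos : ∀ S u : ℝ, 0 < G S u := fun S u => Real.exp_pos _
  have hIntT : ∀ T ≥ (0:ℝ), Integrable (G T) := by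
    intro T hT
    refine hInt0.mono ((hGcont T).aestronglyMeasurable) ?_
    filter_upwards with u
    rw [Real.norm_of_nonneg (hGpos T u).le, Real.norm_of_nonneg (hGpos 0 u).le]
    exact hGle T hT u
  -- value of ∫ G 0
  have hD0 : ∫ u : ℝ, G 0 u = 2 / (1 - y ^ 2 / t ^ 2) := by
    have hsplit := intervalIntegral.integral_Iic_add_Ioi (b := (0:ℝ)) hIic hIoi
    have h1 : ∫ u in Set.Ioi (0:ℝ), G 0 u = 1 / (1 - y / t) := by
      rw [setIntegral_congr_fun measurableSet_Ioi
        (g := fun x => Real.exp (-((1 - y / t) * x))) ?_, exp_int_Ioi _ hc1]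
      intro x hx
      rw [hG0, abs_of_pos hx]
      exact congrArg Real.exp (by ring)
    have h2 : ∫ u in Set.Iic (0:ℝ), G 0 u = 1 / (1 + y / t) := by
      rw [setIntegral_congr_fun measurableSet_Iic
        (g := fun x => Real.exp (-((1 + y / t) * (-x)))) ?_]
      · rw [integral_comp_neg_Iic 0 (fun x => Real.exp (-((1 + y / t) * x))), neg_zero,
          exp_int_Ioi _ hc2]
      intro x hx
      simp only [Set.mem_Iic] at hx
      rw [hG0, abs_of_nonpos hx]
      exact congrArg Real.exp (by ring)
    rw [h1, h2] at hsplit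
    rw [← hsplit]
    have ht' : t ≠ 0 := ht.ne'
    have htm : t - y ≠ 0 := (sub_pos.2 hyt).ne'
    have htp : t + y ≠ 0 := (by positivity : (0:ℝ) < t + y).ne'
    have htm2 : t ^ 2 - y ^ 2 ≠ 0 := by
      intro h; apply htm; nlinarith
    field_simp
    ring
  have hD0pos : 0 < ∫ u : ℝ, G 0 u := by
    rw [hD0]
    have : 0 < 1 - y ^ 2 / t ^ 2 := by
      have : y ^ 2 < t ^ 2 := by nlinarith
      rw [sub_pos, div_lt_one (by positivity)]
      exact this
    positivity
  -- the filter
  have hEv : ∀ᶠ T in nhdsWithin (0:ℝ) (Set.Ioi 0), T ∈ Set.Ioi (0:ℝ) :=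
    eventually_mem_nhdsWithin
  -- numerator limit
  have hNum : Tendsto (fun T => ∫ u in a..b, G T u) (nhdsWithin 0 (Set.Ioi 0))
      (nhds (∫ u in a..b, G 0 u)) := by
    refine intervalIntegral.tendsto_integral_filter_of_dominated_convergence (G 0)
      ?_ ?_ ?_ ?_
    · filter_upwards with T using (hGcont T).aestronglyMeasurable
    · filter_upwards [hEv] with T hT
      filter_upwards with u _
      rw [Real.norm_of_nonneg (hGpos T u).le]
      exact hGle T (le_of_lt hT) u
    · exact (hGcont 0).intervalIntegrable a b
    · filter_upwards with u _
      have : Tendsto (fun T => G T u) (nhds 0) (nhds (G 0 u)) := by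
        refine (Continuous.tendsto ?_ 0)
        exact Real.continuous_exp.comp
          (continuous_const.sub ((continuous_id.mul continuous_const).div_const _))
      exact this.mono_left nhdsWithin_le_nhds
  -- denominator limit
  have hDen : Tendsto (fun T => ∫ u : ℝ, G T u) (nhdsWithin 0 (Set.Ioi 0))
      (nhds (∫ u : ℝ, G 0 u)) := by
    refine tendsto_integral_filter_of_dominated_convergence (G 0)
      ?_ ?_ hInt0 ?_
    · filter_upwards with T using (hGcont T).aestronglyMeasurable
    · filter_upwards [hEv] with T hT
      filter_upwards with u
      rw [Real.norm_of_nonneg (hGpos T u).le]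
      exact hGle T (le_of_lt hT) u
    · filter_upwards with u
      have : Tendsto (fun T => G T u) (nhds 0) (nhds (G 0 u)) := by
        refine (Continuous.tendsto ?_ 0)
        exact Real.continuous_exp.comp
          (continuous_const.sub ((continuous_id.mul continuous_const).div_const _))
      exact this.mono_left nhdsWithin_le_nhds
  have hRatio : Tendsto (fun T => (∫ u in a..b, G T u) / ∫ u : ℝ, G T u)
      (nhdsWithin 0 (Set.Ioi 0))
      (nhds ((∫ u in a..b, G 0 u) / ∫ u : ℝ, G 0 u)) :=
    hNum.div hDen hD0pos.ne'
  -- identify the limit value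
  have hlimval : (∫ u in a..b, G 0 u) / ∫ u : ℝ, G 0 u
      = ∫ x in a..b, (1 - y ^ 2 / t ^ 2) / 2 * Real.exp (-|x| + x * y / t) := by
    rw [intervalIntegral.integral_const_mul, hD0]
    have : ∫ u in a..b, G 0 u = ∫ x in a..b, Real.exp (-|x| + x * y / t) := by
      apply intervalIntegral.integral_congr
      intro x _; exact hG0 x
    rw [this, div_eq_mul_inv, inv_div, mul_comm]
  rw [← hlimval]
  -- now show eventual equality of the two functions
  refine Tendsto.congr' ?_ hRatio
  filter_upwards [hEv] with T hT
  simp only [Set.mem_Ioi] at hT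
  -- pointwise kernel identity
  have hker : ∀ u : ℝ, Real.exp (-(obj1 y t (T * u)) / T)
      = Real.exp (-(y ^ 2 / (2 * t * T))) * G T u := by
    intro u
    rw [hG, Gker_def, ← Real.exp_add]
    refine congrArg Real.exp ?_
    unfold obj1
    rw [abs_mul, abs_of_pos hT]
    field_simp
    ring
  -- numerator change of variables
  have hnum : (∫ x in (T * a)..(T * b), Real.exp (-(obj1 y t x) / T))
      = T * (Real.exp (-(y ^ 2 / (2 * t * T))) * ∫ u in a..b, G T u) := by
    have h := intervalIntegral.smul_integral_comp_mul_left
      (fun x => Real.exp (-(obj1 y t x) / T)) T (a := a) (b := b)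
    rw [← h, smul_eq_mul]
    congr 1
    rw [← intervalIntegral.integral_const_mul]
    apply intervalIntegral.integral_congr
    intro u _
    exact hker u
  have hden : (∫ x : ℝ, Real.exp (-(obj1 y t x) / T))
      = T * (Real.exp (-(y ^ 2 / (2 * t * T))) * ∫ u : ℝ, G T u) := by
    have h := MeasureTheory.Measure.integral_comp_mul_left
      (fun x => Real.exp (-(obj1 y t x) / T)) T
    rw [abs_of_pos (inv_pos.2 hT), smul_eq_mul] at h
    have h2 : (∫ x : ℝ, Real.exp (-(obj1 y t (T * x)) / T))
        = Real.exp (-(y ^ 2 / (2 * t * T))) * ∫ u : ℝ, G T u := by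
      rw [← integral_const_mul]
      congr 1
      funext u
      exact hker u
    rw [h2] at h
    rw [h, ← mul_assoc, mul_inv_cancel₀ hT.ne', one_mul]
  rw [hnum, hden, mul_div_mul_left _ _ hT.ne', mul_div_mul_left _ _ (Real.exp_pos _).ne']
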